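/- Let f : Y → X be smooth, and define i₃ : CS^{p-1}(Y) → CS^p_{II}(f) by i₃(ξ,η) = (χ, 0, η) with χ(C,C') = -ξ(C'). Then i₃ is a group homomorphism whose kernel is exactly the set of characters (ξ,η) on Y that are restrictions f^* of flat characters on X (characters with ω = 0), and whose image acts on CS^p_{II}(f) with orbit space the group CS^p_{III}(f) of type III characters. In particular there is an exact sequence 0 → CS^{p-1}(Y)/CS^{p-1}_{fl}(X) → CS^p_{II}(f) → CS^p_{III}(f) → 0. -/

import Mathlib

/-!
Shared abstract model of the mapping-cone chain complex and of relative
Cheeger–Simons characters.  The abelian groups play the roles of smooth singular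
chain groups:
`A2, A1, A0, Am1 = C_{p+2}(X), C_{p+1}(X), C_p(X), C_{p-1}(X)` and
`B2, B1, B0, Bm1 = C_{p+1}(Y), C_p(Y), C_{p-1}(Y), C_{p-2}(Y)`;
`dX•, dY•` are the boundary operators and `fq, fp, fm` the push-forwards `f_*`
in degrees `p+1, p, p-1`.  Differential forms are modelled by their integration
pairings (homomorphisms to `ℝ`), and `U(1) = ℝ/ℤ` is `AddCircle (1 : ℝ)`.
-/
structure ChainData (A2 A1 A0 Am1 B2 B1 B0 Bm1 : Type)
    [AddCommGroup A2] [AddCommGroup A1] [AddCommGroup A0] [AddCommGroup Am1]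
    [AddCommGroup B2] [AddCommGroup B1] [AddCommGroup B0] [AddCommGroup Bm1] :
    Type where
  dX2 : A2 →+ A1
  dX1 : A1 →+ A0
  dX0 : A0 →+ Am1
  dY2 : B2 →+ B1
  dY1 : B1 →+ B0
  dY0 : B0 →+ Bm1
  fq : B2 →+ A1
  fp : B1 →+ A0
  fm : B0 →+ Am1

variable {A2 A1 A0 Am1 B2 B1 B0 Bm1 : Type}
  [AddCommGroup A2] [AddCommGroup A1] [AddCommGroup A0] [AddCommGroup Am1]
  [AddCommGroup B2] [AddCommGroup B1] [AddCommGroup B0] [AddCommGroup Bm1]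

/-- The group `Z_p(f)` of relative `p`-cycles of the mapping cone complex:
pairs `(C,C')` with `∂C + f_*C' = 0` and `∂C' = 0`. -/
def relCycles (d : ChainData A2 A1 A0 Am1 B2 B1 B0 Bm1) : AddSubgroup (A0 × B0) where
  carrier := {z | d.dX0 z.1 + d.fm z.2 = 0 ∧ d.dY0 z.2 = 0}
  zero_mem' := by simp
  add_mem' := by
    intro a b ha hb
    refine ⟨?_, ?_⟩
    · show d.dX0 (a.1 + b.1) + d.fm (a.2 + b.2) = 0
      rw [map_add, map_add, add_add_add_comm, ha.1, hb.1, add_zero]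
    · show d.dY0 (a.2 + b.2) = 0
      rw [map_add, ha.2, hb.2, add_zero]
  neg_mem' := by
    intro a ha
    refine ⟨?_, ?_⟩
    · show d.dX0 (-a.1) + d.fm (-a.2) = 0
      rw [map_neg, map_neg, ← neg_add, ha.1, neg_zero]
    · show d.dY0 (-a.2) = 0
      rw [map_neg, ha.2, neg_zero]

/-- The group `Z_{p-1}(Y)` of `(p-1)`-cycles of `Y`. -/
def cyclesY (d : ChainData A2 A1 A0 Am1 B2 B1 B0 Bm1) : AddSubgroup B0 where
  carrier := {x | d.dY0 x = 0}
  zero_mem' := by simp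
  add_mem' := by
    intro a b ha hb
    show d.dY0 (a + b) = 0
    rw [map_add, ha, hb, add_zero]
  neg_mem' := by
    intro a ha
    show d.dY0 (-a) = 0
    rw [map_neg, ha, neg_zero]

/-- The projection `π₂ : Z_p(f) → Z_{p-1}(Y)`, `(C,C') ↦ C'`. -/
def proj2 (d : ChainData A2 A1 A0 Am1 B2 B1 B0 Bm1) :
    relCycles d →+ cyclesY d where
  toFun z := ⟨z.val.2, z.property.2⟩
  map_zero' := rfl
  map_add' _ _ := rfl

/-- `(χ, ω, ρ)` is a relative Cheeger–Simons character of type II of degree `p`: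
`χ : Z_p(f) → ℝ/ℤ` a homomorphism; `(ω,ρ)` a relative closed form (`dω = 0` and
`f^*ω = dρ`, expressed through the pairings via Stokes) representing an integral
relative de Rham class; and `χ(∂(D,D')) = ∫_D ω + ∫_{D'} ρ mod ℤ`. -/
def IsTypeII (d : ChainData A2 A1 A0 Am1 B2 B1 B0 Bm1)
    (χ : relCycles d →+ AddCircle (1 : ℝ)) (Iω : A1 →+ ℝ) (Jρ : B1 →+ ℝ) : Prop :=
  (∀ E : A2, Iω (d.dX2 E) = 0) ∧
  (∀ E : B2, Iω (d.fq E) = Jρ (d.dY2 E)) ∧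
  (∀ (C : A1) (C' : B1), d.dX1 C + d.fp C' = 0 → d.dY1 C' = 0 →
      ∃ n : ℤ, Iω C + Jρ C' = n) ∧
  (∀ (D : A1) (D' : B1) (hz : (d.dX1 D + d.fp D', -(d.dY1 D')) ∈ relCycles d),
      χ ⟨(d.dX1 D + d.fp D', -(d.dY1 D')), hz⟩ =
        ((Iω D + Jρ D' : ℝ) : AddCircle (1 : ℝ)))

/-- `(ξ, η)` is an (absolute) Cheeger–Simons character of degree `p-1` on `Y`:
`ξ : Z_{p-1}(Y) → ℝ/ℤ` a homomorphism, `η` an integral closed `p`-form on `Y`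
(modelled by its pairing `Jη`), with `ξ(∂D') = ∫_{D'} η mod ℤ`. -/
def IsCharY (d : ChainData A2 A1 A0 Am1 B2 B1 B0 Bm1)
    (ξ : cyclesY d →+ AddCircle (1 : ℝ)) (Jη : B1 →+ ℝ) : Prop :=
  (∀ E : B2, Jη (d.dY2 E) = 0) ∧
  (∀ C' : B1, d.dY1 C' = 0 → ∃ n : ℤ, Jη C' = n) ∧
  (∀ (D' : B1) (h : d.dY1 D' ∈ cyclesY d),
      ξ ⟨d.dY1 D', h⟩ = ((Jη D' : ℝ) : AddCircle (1 : ℝ)))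

variable {Am2 : Type} [AddCommGroup Am2]

/-- The action of an absolute character `(ξ,η)` on type II relative characters:
`(ξ,η)·(χ,ω,ρ) = (χ - ξ∘π₂, ω, ρ + η)`.  `CS^p_{III}(f)` is its orbit space. -/
noncomputable def charAction (d : ChainData A2 A1 A0 Am1 B2 B1 B0 Bm1)
    (h : (cyclesY d →+ AddCircle (1 : ℝ)) × (B1 →+ ℝ))
    (x : (relCycles d →+ AddCircle (1 : ℝ)) × (A1 →+ ℝ) × (B1 →+ ℝ)) :
    (relCycles d →+ AddCircle (1 : ℝ)) × (A1 →+ ℝ) × (B1 →+ ℝ) :=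
  (x.1 - h.1.comp (proj2 d), x.2.1, x.2.2 + h.2)

/-- The map `i₃ : CS^{p-1}(Y) → CS^p_{II}(f)`, `(ξ,η) ↦ (χ, 0, η)` with
`χ(C,C') = -ξ(C')`. -/
noncomputable def i3 (d : ChainData A2 A1 A0 Am1 B2 B1 B0 Bm1)
    (ξ : cyclesY d →+ AddCircle (1 : ℝ)) (Jη : B1 →+ ℝ) :
    (relCycles d →+ AddCircle (1 : ℝ)) × (A1 →+ ℝ) × (B1 →+ ℝ) :=
  (-(ξ.comp (proj2 d)), 0, Jη)


open CategoryTheory in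
lemma extend_from_subgroup {G : Type} [AddCommGroup G] (S : AddSubgroup G)
    (f : S →+ AddCircle (1 : ℝ)) :
    ∃ g : G →+ AddCircle (1 : ℝ), ∀ s : S, g s.val = f s := by
  haveI : Injective (AddCommGrpCat.of (AddCircle (1 : ℝ))) :=
    AddCommGrpCat.injective_of_divisible _
  let ι : AddCommGrpCat.of S ⟶ AddCommGrpCat.of G := AddCommGrpCat.ofHom S.subtype
  haveI : Mono ι := (AddCommGrpCat.mono_iff_injective _).mpr Subtype.val_injective
  refine ⟨(Injective.factorThru (AddCommGrpCat.ofHom f) ι).hom, fun s => ?_⟩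
  have h := Injective.comp_factorThru (AddCommGrpCat.ofHom f) ι
  exact congrFun (congrArg (fun h => h.hom.toFun) h) s

lemma exists_flat {Am2' : Type} [AddCommGroup Am2']
    (d : ChainData A2 A1 A0 Am1 B2 B1 B0 Bm1) (dXm1 : Am1 →+ Am2')
    (ξ : cyclesY d →+ AddCircle (1 : ℝ))
    (hker : ∀ z : relCycles d, ξ (proj2 d z) = 0) :
    ∃ ζ : dXm1.ker →+ AddCircle (1 : ℝ),
      (∀ (D : A0) (h : d.dX0 D ∈ dXm1.ker), ζ ⟨d.dX0 D, h⟩ = 0) ∧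
      (∀ (C' : B0) (h : C' ∈ cyclesY d) (h' : d.fm C' ∈ dXm1.ker),
        ξ ⟨C', h⟩ = ζ ⟨d.fm C', h'⟩) := by
  classical
  let φ : (cyclesY d × A0) →+ Am1 :=
    AddMonoidHom.mk' (fun x => d.fm x.1.val + d.dX0 x.2) (by
      intro a b
      show d.fm ((a.1 + b.1 : cyclesY d) : B0) + d.dX0 (a.2 + b.2) = _
      rw [AddSubgroup.coe_add, map_add, map_add]
      abel)
  let ψ : (cyclesY d × A0) →+ AddCircle (1 : ℝ) :=
    ξ.comp (AddMonoidHom.fst _ _)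
  have hker0 : ∀ x : cyclesY d × A0, φ x = 0 → ψ x = 0 := by
    intro x hx
    have hz : ((x.2, x.1.val) : A0 × B0) ∈ relCycles d := by
      refine ⟨?_, x.1.property⟩
      have : d.fm x.1.val + d.dX0 x.2 = 0 := hx
      rw [add_comm] at this; exact this
    have := hker ⟨(x.2, x.1.val), hz⟩
    have he : (⟨x.1.val, x.1.property⟩ : cyclesY d) = x.1 := Subtype.ext rfl
    show ξ x.1 = 0
    rw [← he]
    exact this
  let pick : φ.range → (cyclesY d × A0) := fun s =>
    (AddMonoidHom.mem_range.mp s.2).choose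
  have spec : ∀ s : φ.range, φ (pick s) = s.val := fun s =>
    (AddMonoidHom.mem_range.mp s.2).choose_spec
  let ζ₀ : φ.range →+ AddCircle (1 : ℝ) :=
    AddMonoidHom.mk' (fun s => ψ (pick s)) (by
      intro a b
      have h0 : φ (pick (a + b) - pick a - pick b) = 0 := by
        rw [map_sub, map_sub, spec, spec, spec, AddSubgroup.coe_add]
        abel
      have h1 := hker0 _ h0
      rw [map_sub, map_sub, sub_sub, sub_eq_zero] at h1
      exact h1)
  have ζ₀eval : ∀ (x : cyclesY d × A0) (h : φ x ∈ φ.range),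
      ζ₀ ⟨φ x, h⟩ = ψ x := by
    intro x h
    have h0 : φ (pick ⟨φ x, h⟩ - x) = 0 := by
      rw [map_sub, spec]; exact sub_self _
    have h1 := hker0 _ h0
    rw [map_sub, sub_eq_zero] at h1
    exact h1
  obtain ⟨g, hg⟩ := extend_from_subgroup φ.range ζ₀
  refine ⟨g.comp dXm1.ker.subtype, ?_, ?_⟩
  · intro D h
    have heq : φ ((0 : cyclesY d), D) = d.dX0 D := by
      show d.fm (0 : cyclesY d).val + d.dX0 D = d.dX0 D
      rw [AddSubgroup.coe_zero, map_zero, zero_add]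
    have hm : d.dX0 D ∈ φ.range := ⟨((0 : cyclesY d), D), heq⟩
    show g (d.dX0 D) = 0
    have := hg ⟨d.dX0 D, hm⟩
    rw [this]
    have : (⟨d.dX0 D, hm⟩ : φ.range) = ⟨φ ((0 : cyclesY d), D), heq ▸ hm⟩ :=
      Subtype.ext heq.symm
    rw [this, ζ₀eval]
    show ξ 0 = 0
    exact map_zero ξ
  · intro C' h h'
    have heq : φ ((⟨C', h⟩ : cyclesY d), (0 : A0)) = d.fm C' := by
      show d.fm C' + d.dX0 0 = d.fm C'
      rw [map_zero, add_zero]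
    have hm : d.fm C' ∈ φ.range := ⟨((⟨C', h⟩ : cyclesY d), 0), heq⟩
    show ξ ⟨C', h⟩ = g (d.fm C')
    have h2 := hg ⟨d.fm C', hm⟩
    rw [h2]
    have h3 : (⟨d.fm C', hm⟩ : φ.range) = ⟨φ ((⟨C', h⟩ : cyclesY d), 0), heq ▸ hm⟩ :=
      Subtype.ext heq.symm
    rw [h3, ζ₀eval]
    rfl

lemma charAction_eq (d : ChainData A2 A1 A0 Am1 B2 B1 B0 Bm1)
    (ξ : cyclesY d →+ AddCircle (1 : ℝ)) (Jη : B1 →+ ℝ)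
    (x : (relCycles d →+ AddCircle (1 : ℝ)) × (A1 →+ ℝ) × (B1 →+ ℝ)) :
    charAction d (ξ, Jη) x = x + i3 d ξ Jη := by
  show (x.1 - ξ.comp (proj2 d), x.2.1, x.2.2 + Jη)
      = (x.1 + -(ξ.comp (proj2 d)), x.2.1 + 0, x.2.2 + Jη)
  rw [sub_eq_add_neg, add_zero]

/-!
STATEMENT 8.  In the abstract model, `Am2 = C_{p-2}(X)`, `dXm1 : C_{p-1}(X) →
C_{p-2}(X)` the boundary, `fmm = f_*` in degree `p-2`; `Z_{p-1}(X) = ker dXm1`.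
A flat character on `X` of degree `p-1` is `(ζ, 0)` with `ζ : Z_{p-1}(X) → ℝ/ℤ`
vanishing on boundaries; its pullback to `Y` is `(ζ ∘ f_*, 0)`.
Claims: (1) `i₃` is a group homomorphism; (2) its values are type II relative
characters; (3) its kernel is exactly the set of characters `(ξ,η)` on `Y` that
are pullbacks `f^*` of flat characters on `X`; (4) the image of `i₃` acts on
`CS^p_{II}(f)` by translation, the action `(ξ,η)·x` being `x + i₃(ξ,η)`, so the
orbit space `CS^p_{III}(f)` is the quotient by `im i₃` and the sequence
`0 → CS^{p-1}(Y)/CS^{p-1}_{fl}(X) → CS^p_{II}(f) → CS^p_{III}(f) → 0` is exact. -/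
theorem stmt_8 (d : ChainData A2 A1 A0 Am1 B2 B1 B0 Bm1)
    (dXm1 : Am1 →+ Am2) (fmm : Bm1 →+ Am2)
    (hXm : ∀ a : A0, dXm1 (d.dX0 a) = 0)
    (hfm : ∀ x : B0, dXm1 (d.fm x) = fmm (d.dY0 x)) :
    (∀ (ξ ξ' : cyclesY d →+ AddCircle (1 : ℝ)) (Jη Jη' : B1 →+ ℝ),
        i3 d (ξ + ξ') (Jη + Jη') = i3 d ξ Jη + i3 d ξ' Jη') ∧
    (∀ (ξ : cyclesY d →+ AddCircle (1 : ℝ)) (Jη : B1 →+ ℝ), IsCharY d ξ Jη →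
        IsTypeII d (-(ξ.comp (proj2 d))) 0 Jη) ∧
    (∀ (ξ : cyclesY d →+ AddCircle (1 : ℝ)) (Jη : B1 →+ ℝ), IsCharY d ξ Jη →
        (i3 d ξ Jη = 0 ↔
          (Jη = 0 ∧ ∃ ζ : dXm1.ker →+ AddCircle (1 : ℝ),
            (∀ (D : A0) (h : d.dX0 D ∈ dXm1.ker), ζ ⟨d.dX0 D, h⟩ = 0) ∧
            (∀ (C' : B0) (h : C' ∈ cyclesY d) (h' : d.fm C' ∈ dXm1.ker),
              ξ ⟨C', h⟩ = ζ ⟨d.fm C', h'⟩)))) ∧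
    (∀ x y : (relCycles d →+ AddCircle (1 : ℝ)) × (A1 →+ ℝ) × (B1 →+ ℝ),
        IsTypeII d x.1 x.2.1 x.2.2 → IsTypeII d y.1 y.2.1 y.2.2 →
        ((∃ (ξ : cyclesY d →+ AddCircle (1 : ℝ)) (Jη : B1 →+ ℝ),
            IsCharY d ξ Jη ∧ charAction d (ξ, Jη) x = y) ↔
          (∃ (ξ : cyclesY d →+ AddCircle (1 : ℝ)) (Jη : B1 →+ ℝ),
            IsCharY d ξ Jη ∧ y = x + i3 d ξ Jη))) := by
  refine ⟨?_, ?_, ?_, ?_⟩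
  · intro ξ ξ' Jη Jη'
    show ((-(ξ + ξ').comp (proj2 d) : _), (0 : A1 →+ ℝ), Jη + Jη')
        = (-(ξ.comp (proj2 d)) + -(ξ'.comp (proj2 d)), (0 : A1 →+ ℝ) + 0, Jη + Jη')
    rw [AddMonoidHom.add_comp, neg_add, add_zero]
  · intro ξ Jη hc
    obtain ⟨h1, h2, h3⟩ := hc
    refine ⟨fun E => rfl, fun E => (h1 E).symm, ?_, ?_⟩
    · intro C C' hC hC'
      obtain ⟨n, hn⟩ := h2 C' hC'
      exact ⟨n, by simpa using hn⟩
    · intro D D' hz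
      have hcy : d.dY1 D' ∈ cyclesY d := by
        have := hz.2
        show d.dY0 (d.dY1 D') = 0
        rwa [map_neg, neg_eq_zero] at this
      have hproj : proj2 d ⟨(d.dX1 D + d.fp D', -(d.dY1 D')), hz⟩
          = -(⟨d.dY1 D', hcy⟩ : cyclesY d) := Subtype.ext rfl
      show -(ξ (proj2 d ⟨(d.dX1 D + d.fp D', -(d.dY1 D')), hz⟩)) = _
      rw [hproj, map_neg, neg_neg, h3 D' hcy]
      show ((Jη D' : ℝ) : AddCircle (1 : ℝ)) = (((0 : A1 →+ ℝ) D + Jη D' : ℝ) : _)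
      norm_num
  · intro ξ Jη hc
    constructor
    · intro h0
      have h1 : -(ξ.comp (proj2 d)) = 0 ∧ (0 : A1 →+ ℝ) = 0 ∧ Jη = 0 := by
        have h0' : ((-(ξ.comp (proj2 d)) : _), (0 : A1 →+ ℝ), Jη)
            = ((0 : relCycles d →+ AddCircle (1 : ℝ)), (0 : A1 →+ ℝ),
                (0 : B1 →+ ℝ)) := h0
        rw [Prod.mk.injEq, Prod.mk.injEq] at h0'
        exact ⟨h0'.1, h0'.2⟩
      refine ⟨h1.2.2, ?_⟩
      have hker : ∀ z : relCycles d, ξ (proj2 d z) = 0 := by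
        intro z
        have := h1.1
        rw [neg_eq_zero] at this
        exact DFunLike.congr_fun this z
      exact exists_flat d dXm1 ξ hker
    · rintro ⟨hJ, ζ, hζ1, hζ2⟩
      have hker : ∀ z : relCycles d, ξ (proj2 d z) = 0 := by
        intro z
        have hcy : z.val.2 ∈ cyclesY d := z.property.2
        have hk : d.fm z.val.2 ∈ dXm1.ker := by
          show dXm1 (d.fm z.val.2) = 0
          rw [hfm, hcy, map_zero]
        have heq : d.fm z.val.2 = d.dX0 (-z.val.1) := by
          rw [map_neg]
          exact eq_neg_of_add_eq_zero_right z.property.1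
        have hk' : d.dX0 (-z.val.1) ∈ dXm1.ker := heq ▸ hk
        have : ξ ⟨z.val.2, hcy⟩ = ζ ⟨d.fm z.val.2, hk⟩ := hζ2 _ hcy hk
        rw [show (⟨d.fm z.val.2, hk⟩ : dXm1.ker) = ⟨d.dX0 (-z.val.1), hk'⟩ from
          Subtype.ext heq, hζ1] at this
        exact this
      show ((-(ξ.comp (proj2 d)) : _), (0 : A1 →+ ℝ), Jη) = (0, 0, 0)
      refine Prod.ext ?_ (Prod.ext rfl hJ)
      rw [neg_eq_zero]
      ext z
      exact hker z
  · intro x y _ _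
    constructor
    · rintro ⟨ξ, Jη, hc, hact⟩
      exact ⟨ξ, Jη, hc, by rw [← hact, charAction_eq]⟩
    · rintro ⟨ξ, Jη, hc, hact⟩
      exact ⟨ξ, Jη, hc, by rw [charAction_eq, ← hact]⟩
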